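/- Let X and Y be measurable spaces, let ε, δ ∈ (0,1), let k ≥ 1 and t ≥ 0 be integers, let D_1, ..., D_k be probability measures on X × Y, and let g : X → Y be a function whose disagreement set {(x,y) : g(x) ≠ y} is measurable. Set n = ⌈(432/ε)·ln(4k(t+1)²/δ)⌉, and for each player i draw n i.i.d. samples from D_i, i.e., consider the product measure μ = ⊗_{i=1}^k D_i^{⊗n} on ∏_{i=1}^k (X × Y)^n. Then with μ-probability at least 1 − δ/(4(t+1)²), the following holds simultaneously for every i ∈ {1,...,k}: (1) if err_{D_i}(g) ≤ ε/12, then the empirical error of g on the i-th sample tuple T_i is at most ε/6; and (2) if err_{D_i}(g) > ε/4, then the empirical error of g on T_i is strictly greater than ε/6. Consequently, the set {i : err_{T_i}(g) ≤ ε/6} returned by the Test procedure contains every i with err_{D_i}(g) ≤ ε/12 and none of the i with err_{D_i}(g) > ε/4. -/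

import Mathlib

open MeasureTheory
open scoped Classical
open scoped ENNReal

set_option maxHeartbeats 1000000


section chernoffAux
variable {Ω : Type*} [MeasurableSpace Ω]

lemma lintegral_ite_aux (ν : Measure Ω) [IsProbabilityMeasure ν] {A : Set Ω}
    (hA : MeasurableSet A) (c : ℝ≥0∞) :
    ∫⁻ x, (if x ∈ A then c else 1) ∂ν = c * ν A + ν Aᶜ := by
  have : (fun x => if x ∈ A then c else 1)
      = fun x => A.indicator (fun _ => c) x + Aᶜ.indicator (fun _ => 1) x := by
    funext x
    by_cases h : x ∈ A <;> simp [h]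
  rw [this, lintegral_add_left (measurable_const.indicator hA),
    lintegral_indicator hA, lintegral_indicator hA.compl]
  simp

lemma lintegral_pi_pow_aux (n : ℕ) (ν : Measure Ω) [SigmaFinite ν] (f : Ω → ℝ≥0∞)
    (hf : Measurable f) :
    ∫⁻ τ : Fin n → Ω, ∏ j, f (τ j) ∂(Measure.pi fun _ : Fin n => ν)
      = (∫⁻ x, f x ∂ν) ^ n := by
  induction n with
  | zero => simp
  | succ n ih =>
    rw [← ((measurePreserving_piFinSuccAbove (fun _ : Fin (n+1) => ν) 0).symm).lintegral_comp_emb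
      (MeasurableEquiv.measurableEmbedding _)]
    have hrw : ∀ a : Ω × (Fin n → Ω),
        (∏ j : Fin (n+1), f (((MeasurableEquiv.piFinSuccAbove (fun _ : Fin (n+1) => Ω) 0)).symm a j))
          = f a.1 * ∏ j : Fin n, f (a.2 j) := by
      intro a
      simp [MeasurableEquiv.piFinSuccAbove_symm_apply, Fin.prod_univ_succ, Fin.zero_succAbove]
    simp_rw [hrw]
    rw [lintegral_prod_mul (f := f) (g := fun τ : Fin n → Ω => ∏ j, f (τ j)) hf.aemeasurable
      (Finset.measurable_prod _ fun j _ => hf.comp (measurable_pi_apply j)).aemeasurable,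
      ih, pow_succ]
    ring

lemma chernoff_core_aux (ν : Measure Ω) [IsProbabilityMeasure ν] {A : Set Ω}
    (hA : MeasurableSet A) (n : ℕ) (b c : ℝ≥0∞) (hc0 : c ≠ 0) (hctop : c ≠ ∞)
    (E : Set (Fin n → Ω))
    (hE : ∀ τ ∈ E, c ≤ ∏ j, (if τ j ∈ A then b else 1)) :
    (Measure.pi fun _ : Fin n => ν) E ≤ (b * ν A + ν Aᶜ) ^ n / c := by
  set f : Ω → ℝ≥0∞ := fun x => if x ∈ A then b else 1 with hfdef
  have hf : Measurable f := Measurable.ite hA measurable_const measurable_const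
  have hF : Measurable fun τ : Fin n → Ω => ∏ j, f (τ j) :=
    Finset.measurable_prod _ fun j _ => hf.comp (measurable_pi_apply j)
  calc (Measure.pi fun _ : Fin n => ν) E
      ≤ (Measure.pi fun _ : Fin n => ν) {τ | c ≤ ∏ j, f (τ j)} :=
        measure_mono fun τ hτ => hE τ hτ
    _ ≤ (∫⁻ τ, ∏ j, f (τ j) ∂(Measure.pi fun _ : Fin n => ν)) / c := by
        rw [ENNReal.le_div_iff_mul_le (Or.inl hc0) (Or.inl hctop), mul_comm]
        exact mul_meas_ge_le_lintegral hF c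
    _ = (b * ν A + ν Aᶜ) ^ n / c := by
        rw [lintegral_pi_pow_aux n ν f hf, lintegral_ite_aux ν hA b]

lemma prod_ite_card_aux {n : ℕ} (A : Set Ω) (b : ℝ≥0∞) (τ : Fin n → Ω) :
    ∏ j, (if τ j ∈ A then b else 1)
      = b ^ (Finset.univ.filter fun j => τ j ∈ A).card := by
  simp [Finset.prod_ite, Finset.prod_const]

lemma chernoff_upper_aux (ν : Measure Ω) [IsProbabilityMeasure ν] {A : Set Ω}
    (hA : MeasurableSet A) (n : ℕ) (a : ℝ) (ha : 0 ≤ a) :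
    (Measure.pi fun _ : Fin n => ν)
        {τ | a ≤ ((Finset.univ.filter fun j => τ j ∈ A).card : ℝ)}
      ≤ ENNReal.ofReal (Real.exp (n * (ν A).toReal - a * Real.log 2)) := by
  set p := (ν A).toReal with hpdef
  have hp : ν A = ENNReal.ofReal p := (ENNReal.ofReal_toReal (measure_ne_top _ _)).symm
  have hp0 : 0 ≤ p := ENNReal.toReal_nonneg
  have hp1 : p ≤ 1 := by
    have h := prob_le_one (μ := ν) (s := A)
    have := ENNReal.toReal_mono ENNReal.one_ne_top h
    simpa using this
  have hq : ν Aᶜ = ENNReal.ofReal (1 - p) := by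
    rw [prob_compl_eq_one_sub hA, hp, ← ENNReal.ofReal_one, ← ENNReal.ofReal_sub _ hp0]
  set c := ENNReal.ofReal (Real.exp (a * Real.log 2)) with hcdef
  have hc0 : c ≠ 0 := (ENNReal.ofReal_pos.mpr (Real.exp_pos _)).ne'
  have hctop : c ≠ ∞ := ENNReal.ofReal_ne_top
  refine le_trans (chernoff_core_aux ν hA n 2 c hc0 hctop _ ?_) ?_
  · intro τ hτ
    rw [prod_ite_card_aux]
    have h2 : (2:ℝ≥0∞) ^ (Finset.univ.filter fun j => τ j ∈ A).card
        = ENNReal.ofReal ((2:ℝ) ^ (Finset.univ.filter fun j => τ j ∈ A).card) := by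
      rw [ENNReal.ofReal_pow (by norm_num)]
      norm_num
    rw [h2, hcdef]
    apply ENNReal.ofReal_le_ofReal
    have : Real.exp (a * Real.log 2) = (2:ℝ) ^ a := by
      rw [Real.rpow_def_of_pos (by norm_num : (0:ℝ) < 2)]
      ring_nf
    rw [this, ← Real.rpow_natCast 2]
    exact Real.rpow_le_rpow_of_exponent_le one_le_two hτ
  · have h1 : (2:ℝ≥0∞) * ν A + ν Aᶜ = ENNReal.ofReal (1 + p) := by
      rw [hp, hq, show (2:ℝ≥0∞) = ENNReal.ofReal 2 by norm_num,
        ← ENNReal.ofReal_mul (by norm_num), ← ENNReal.ofReal_add (by linarith) (by linarith)]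
      ring_nf
    rw [h1, ← ENNReal.ofReal_pow (by linarith), hcdef,
      ← ENNReal.ofReal_div_of_pos (Real.exp_pos _)]
    apply ENNReal.ofReal_le_ofReal
    rw [div_le_iff₀ (Real.exp_pos _), ← Real.exp_add]
    have h3 : (n:ℝ) * p - a * Real.log 2 + a * Real.log 2 = (n:ℝ) * p := by ring
    rw [h3, Real.exp_nat_mul]
    exact pow_le_pow_left₀ (by linarith) (by linarith [Real.add_one_le_exp p]) n

lemma chernoff_lower_aux (ν : Measure Ω) [IsProbabilityMeasure ν] {A : Set Ω}
    (hA : MeasurableSet A) (n : ℕ) (a : ℝ) (ha : 0 ≤ a) :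
    (Measure.pi fun _ : Fin n => ν)
        {τ | ((Finset.univ.filter fun j => τ j ∈ A).card : ℝ) ≤ a}
      ≤ ENNReal.ofReal (Real.exp (a * Real.log 2 - n * (ν A).toReal / 2)) := by
  set p := (ν A).toReal with hpdef
  have hp : ν A = ENNReal.ofReal p := (ENNReal.ofReal_toReal (measure_ne_top _ _)).symm
  have hp0 : 0 ≤ p := ENNReal.toReal_nonneg
  have hp1 : p ≤ 1 := by
    have h := prob_le_one (μ := ν) (s := A)
    have := ENNReal.toReal_mono ENNReal.one_ne_top h
    simpa using this
  have hq : ν Aᶜ = ENNReal.ofReal (1 - p) := by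
    rw [prob_compl_eq_one_sub hA, hp, ← ENNReal.ofReal_one, ← ENNReal.ofReal_sub _ hp0]
  set c := ENNReal.ofReal (Real.exp (-(a * Real.log 2))) with hcdef
  have hc0 : c ≠ 0 := (ENNReal.ofReal_pos.mpr (Real.exp_pos _)).ne'
  have hctop : c ≠ ∞ := ENNReal.ofReal_ne_top
  have hbinv : (2:ℝ≥0∞)⁻¹ = ENNReal.ofReal (2:ℝ)⁻¹ := by
    rw [ENNReal.ofReal_inv_of_pos (by norm_num)]
    norm_num
  refine le_trans (chernoff_core_aux ν hA n 2⁻¹ c hc0 hctop _ ?_) ?_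
  · intro τ hτ
    rw [prod_ite_card_aux]
    have h2 : ((2:ℝ≥0∞)⁻¹) ^ (Finset.univ.filter fun j => τ j ∈ A).card
        = ENNReal.ofReal (((2:ℝ)⁻¹) ^ (Finset.univ.filter fun j => τ j ∈ A).card) := by
      rw [ENNReal.ofReal_pow (by norm_num), hbinv]
    rw [h2, hcdef]
    apply ENNReal.ofReal_le_ofReal
    set N := (Finset.univ.filter fun j => τ j ∈ A).card
    have h4 : ((2:ℝ)⁻¹) ^ N = (2:ℝ) ^ (-(N:ℝ)) := by
      rw [Real.rpow_neg (by norm_num), Real.rpow_natCast, inv_pow]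
    have h5 : Real.exp (-(a * Real.log 2)) = (2:ℝ) ^ (-a) := by
      rw [Real.rpow_def_of_pos (by norm_num : (0:ℝ) < 2)]
      ring_nf
    rw [h4, h5]
    exact Real.rpow_le_rpow_of_exponent_le one_le_two (by exact neg_le_neg hτ)
  · have h1 : (2:ℝ≥0∞)⁻¹ * ν A + ν Aᶜ = ENNReal.ofReal ((2:ℝ)⁻¹ * p + (1 - p)) := by
      rw [hp, hq, hbinv, ← ENNReal.ofReal_mul (by norm_num),
        ← ENNReal.ofReal_add (by linarith) (by linarith)]
    rw [h1, ← ENNReal.ofReal_pow (by linarith), hcdef,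
      ← ENNReal.ofReal_div_of_pos (Real.exp_pos _)]
    apply ENNReal.ofReal_le_ofReal
    rw [div_le_iff₀ (Real.exp_pos _), ← Real.exp_add]
    have h3 : a * Real.log 2 - ↑n * p / 2 + -(a * Real.log 2) = (n:ℝ) * (-(p/2)) := by ring
    rw [h3, Real.exp_nat_mul]
    exact pow_le_pow_left₀ (by linarith) (by linarith [Real.add_one_le_exp (-(p/2))]) n

lemma pi_eval_measure_aux {ι : Type*} [Fintype ι] {α : ι → Type*} [∀ i, MeasurableSpace (α i)]
    (μ : ∀ i, Measure (α i)) [∀ i, IsProbabilityMeasure (μ i)] (i : ι) (B : Set (α i)) :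
    Measure.pi μ (Function.eval i ⁻¹' B) = μ i B := by
  classical
  rw [Set.eval_preimage, Measure.pi_pi]
  rw [Finset.prod_eq_single i]
  · simp
  · intro j _ hj
    simp [Function.update_of_ne hj]
  · simp

end chernoffAux

/-- Correctness of the `Test` procedure: drawing
`n = ⌈(432/ε)·ln(4k(t+1)²/δ)⌉` i.i.d. samples from each player's distribution,
with probability at least `1 - δ/(4(t+1)²)` the empirical error of `g`
on player `i`'s sample is at most `ε/6` whenever `err_{D_i}(g) ≤ ε/12`, and
strictly greater than `ε/6` whenever `err_{D_i}(g) > ε/4`, simultaneously for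
all players `i`. -/
theorem test_correct
    {X Y : Type*} [MeasurableSpace X] [MeasurableSpace Y]
    (ε δ : ℝ) (hε : ε ∈ Set.Ioo (0 : ℝ) 1) (hδ : δ ∈ Set.Ioo (0 : ℝ) 1)
    (k : ℕ) (hk : 1 ≤ k) (t : ℕ)
    (D : Fin k → Measure (X × Y)) [∀ i, IsProbabilityMeasure (D i)]
    (g : X → Y) (hg : MeasurableSet {p : X × Y | g p.1 ≠ p.2})
    (n : ℕ) (hn : n = ⌈(432 / ε) * Real.log (4 * k * (t + 1) ^ 2 / δ)⌉₊)
    (μ : Measure (Fin k → Fin n → X × Y))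
    (hμ : μ = Measure.pi (fun i : Fin k => Measure.pi (fun _ : Fin n => D i))) :
    ENNReal.ofReal (1 - δ / (4 * (t + 1) ^ 2)) ≤
      μ {ω | ∀ i : Fin k,
        ((D i {p : X × Y | g p.1 ≠ p.2}).toReal ≤ ε / 12 →
          ((Finset.univ.filter (fun j : Fin n => g (ω i j).1 ≠ (ω i j).2)).card : ℝ) / n
            ≤ ε / 6) ∧
        (ε / 4 < (D i {p : X × Y | g p.1 ≠ p.2}).toReal →
          ε / 6 <
            ((Finset.univ.filter (fun j : Fin n => g (ω i j).1 ≠ (ω i j).2)).card : ℝ) / n)} := by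
  obtain ⟨hε0, hε1⟩ := hε
  obtain ⟨hδ0, hδ1⟩ := hδ
  set A : Set (X × Y) := {p : X × Y | g p.1 ≠ p.2} with hAdef
  set M : ℝ := 4 * k * (t + 1) ^ 2 / δ with hMdef
  have hk1 : (1:ℝ) ≤ k := by exact_mod_cast hk
  have ht1 : (1:ℝ) ≤ ((t:ℝ) + 1) ^ 2 := by nlinarith [(Nat.cast_nonneg t : (0:ℝ) ≤ (t:ℝ))]
  have hM4 : (4:ℝ) ≤ M := by
    rw [hMdef, le_div_iff₀ hδ0]
    nlinarith
  have hM0 : (0:ℝ) < M := by linarith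
  have hlogM : 0 < Real.log M := Real.log_pos (by linarith)
  have hnn : 432 * Real.log M ≤ (n:ℝ) * ε := by
    have h1 : (432 / ε) * Real.log M ≤ (n:ℝ) := by
      rw [hn]
      exact Nat.le_ceil _
    have h2 : ((432 / ε) * Real.log M) * ε ≤ (n:ℝ) * ε :=
      mul_le_mul_of_nonneg_right h1 (le_of_lt hε0)
    calc 432 * Real.log M = ((432 / ε) * Real.log M) * ε := by field_simp
      _ ≤ (n:ℝ) * ε := h2
  have hnpos : 0 < n := by
    rw [hn]
    apply Nat.ceil_pos.mpr
    positivity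
  have hnR : (0:ℝ) < n := by exact_mod_cast hnpos
  set a : ℝ := (n:ℝ) * ε / 6 with hadef
  have ha : 0 ≤ a := by positivity
  -- the per-player bad sets
  set N : (Fin n → X × Y) → ℕ :=
    fun τ => (Finset.univ.filter fun j => τ j ∈ A).card with hNdef
  set B : Fin k → Set (Fin n → X × Y) := fun i =>
    {τ | ¬ (((D i A).toReal ≤ ε / 12 → ((N τ : ℝ)) / n ≤ ε / 6) ∧
        (ε / 4 < (D i A).toReal → ε / 6 < ((N τ : ℝ)) / n))} with hBdef
  -- uniform bound on bad sets
  have hexp2 : ∀ x : ℝ, x ≤ -(2 * Real.log M) →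
      Real.exp x ≤ δ / (4 * k * ((t:ℝ) + 1) ^ 2) := by
    intro x hx
    have h1 : Real.exp x ≤ Real.exp (-(2 * Real.log M)) := Real.exp_le_exp.mpr hx
    have h2 : Real.exp (-(2 * Real.log M)) = (M ^ 2)⁻¹ := by
      rw [show (2:ℝ) * Real.log M = Real.log (M ^ 2) by rw [Real.log_pow]; norm_num,
        Real.exp_neg, Real.exp_log (by positivity)]
    have h3 : (M ^ 2)⁻¹ ≤ M⁻¹ := by
      apply inv_anti₀ hM0
      nlinarith
    have h4 : M⁻¹ = δ / (4 * k * ((t:ℝ) + 1) ^ 2) := by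
      rw [hMdef, inv_div]
    calc Real.exp x ≤ (M ^ 2)⁻¹ := by rw [← h2]; exact h1
      _ ≤ M⁻¹ := h3
      _ = _ := h4
  have hkey : ∀ i : Fin k, (Measure.pi fun _ : Fin n => D i) (B i)
      ≤ ENNReal.ofReal (δ / (4 * k * ((t:ℝ) + 1) ^ 2)) := by
    intro i
    set p : ℝ := (D i A).toReal with hpdef
    have hp0 : 0 ≤ p := ENNReal.toReal_nonneg
    have hlog2u : Real.log 2 < 0.6931471808 := Real.log_two_lt_d9
    have hlog2l : 0.6931471803 < Real.log 2 := Real.log_two_gt_d9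
    by_cases hc1 : p ≤ ε / 12
    · -- upper tail
      have hsub : B i ⊆ {τ | a ≤ ((@Finset.filter (Fin n) (fun j => τ j ∈ A)
          (fun j => Classical.propDecidable _) Finset.univ).card : ℝ)} := by
        intro τ hτ
        simp only [hBdef, Set.mem_setOf_eq, not_and_or] at hτ
        show a ≤ ((@Finset.filter (Fin n) (fun j => τ j ∈ A)
          (fun j => Classical.propDecidable _) Finset.univ).card : ℝ)
        rw [Finset.filter_congr_decidable]
        rcases hτ with h | h
        · push_neg at h
          obtain ⟨-, h2⟩ := h
          rw [lt_div_iff₀ hnR] at h2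
          rw [hadef]
          nlinarith
        · exfalso
          push_neg at h
          obtain ⟨h1, -⟩ := h
          linarith
      refine le_trans (measure_mono hsub) (le_trans (chernoff_upper_aux (D i) hg n a ha) ?_)
      apply ENNReal.ofReal_le_ofReal
      apply hexp2
      have hnp : (n:ℝ) * p ≤ (n:ℝ) * (ε / 12) :=
        mul_le_mul_of_nonneg_left hc1 (by positivity)
      have hfac : 432 * Real.log M * (Real.log 2 / 6 - 1 / 12)
          ≤ (n:ℝ) * ε * (Real.log 2 / 6 - 1 / 12) :=
        mul_le_mul_of_nonneg_right hnn (by nlinarith)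
      rw [hadef]
      nlinarith
    · -- p > ε/12
      by_cases hc2 : ε / 4 < p
      · -- lower tail
        have hsub : B i ⊆ {τ | ((@Finset.filter (Fin n) (fun j => τ j ∈ A)
            (fun j => Classical.propDecidable _) Finset.univ).card : ℝ) ≤ a} := by
          intro τ hτ
          simp only [hBdef, Set.mem_setOf_eq, not_and_or] at hτ
          show ((@Finset.filter (Fin n) (fun j => τ j ∈ A)
            (fun j => Classical.propDecidable _) Finset.univ).card : ℝ) ≤ a
          rw [Finset.filter_congr_decidable]
          rcases hτ with h | h
          · exfalso
            push_neg at h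
            obtain ⟨h1, -⟩ := h
            linarith
          · push_neg at h
            obtain ⟨-, h2⟩ := h
            rw [div_le_iff₀ hnR] at h2
            rw [hadef]
            nlinarith
        refine le_trans (measure_mono hsub) (le_trans (chernoff_lower_aux (D i) hg n a ha) ?_)
        apply ENNReal.ofReal_le_ofReal
        apply hexp2
        have hnp : (n:ℝ) * (ε / 4) ≤ (n:ℝ) * p :=
          mul_le_mul_of_nonneg_left (le_of_lt hc2) (by positivity)
        have hfac : 432 * Real.log M * (1 / 8 - Real.log 2 / 6)
            ≤ (n:ℝ) * ε * (1 / 8 - Real.log 2 / 6) :=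
          mul_le_mul_of_nonneg_right hnn (by nlinarith)
        rw [hadef]
        nlinarith
      · -- middle case : B i is empty
        have hsub : B i ⊆ (∅ : Set (Fin n → X × Y)) := by
          intro τ hτ
          simp only [hBdef, Set.mem_setOf_eq] at hτ
          exact hτ ⟨fun h => absurd h hc1, fun h => absurd h hc2⟩
        rw [Set.subset_empty_iff] at hsub
        rw [hsub]
        simp
  -- global assembly
  set T : Set (Fin k → Fin n → X × Y) := {ω | ∀ i : Fin k,
        ((D i A).toReal ≤ ε / 12 →
          ((N (ω i) : ℝ)) / n ≤ ε / 6) ∧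
        (ε / 4 < (D i A).toReal →
          ε / 6 < ((N (ω i) : ℝ)) / n)} with hTdef
  have hTmatch : T = {ω : Fin k → Fin n → X × Y | ∀ i : Fin k,
        ((D i {p : X × Y | g p.1 ≠ p.2}).toReal ≤ ε / 12 →
          ((Finset.univ.filter (fun j : Fin n => g (ω i j).1 ≠ (ω i j).2)).card : ℝ) / n
            ≤ ε / 6) ∧
        (ε / 4 < (D i {p : X × Y | g p.1 ≠ p.2}).toReal →
          ε / 6 <
            ((Finset.univ.filter (fun j : Fin n => g (ω i j).1 ≠ (ω i j).2)).card : ℝ) / n)} := rfl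
  rw [← hTmatch]
  have hNmeas : Measurable N := by
    have : N = fun τ => ∑ j : Fin n, if τ j ∈ A then 1 else 0 := by
      funext τ
      rw [hNdef]
      exact Finset.card_filter _ _
    rw [this]
    exact Finset.measurable_sum _ fun j _ =>
      Measurable.ite ((measurable_pi_apply j) hg) measurable_const measurable_const
  have hBmeas : ∀ i, MeasurableSet (B i) := by
    intro i
    have : B i = N ⁻¹' {m : ℕ | ¬ (((D i A).toReal ≤ ε / 12 → ((m : ℝ)) / n ≤ ε / 6) ∧
        (ε / 4 < (D i A).toReal → ε / 6 < ((m : ℝ)) / n))} := rfl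
    rw [this]
    exact hNmeas (by trivial)
  have hT : MeasurableSet T := by
    have : T = ⋂ i, Function.eval i ⁻¹' (B i)ᶜ := by
      ext ω
      simp only [hTdef, Set.mem_setOf_eq, Set.mem_iInter, Set.mem_preimage, Set.mem_compl_iff,
        hBdef, not_not, Function.eval]
    rw [this]
    exact MeasurableSet.iInter fun i => (measurable_pi_apply i) (hBmeas i).compl
  have hTc : Tᶜ ⊆ ⋃ i, Function.eval i ⁻¹' (B i) := by
    intro ω hω
    simp only [hTdef, Set.mem_compl_iff, Set.mem_setOf_eq, not_forall] at hω
    obtain ⟨i, hi⟩ := hω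
    exact Set.mem_iUnion.mpr ⟨i, hi⟩
  have hμprob : IsProbabilityMeasure μ := by
    rw [hμ]
    infer_instance
  have hTcb : μ Tᶜ ≤ ENNReal.ofReal (δ / (4 * ((t:ℝ) + 1) ^ 2)) := by
    calc μ Tᶜ ≤ ∑ i, μ (Function.eval i ⁻¹' (B i)) :=
          le_trans (measure_mono hTc) (measure_iUnion_fintype_le _ _)
      _ = ∑ i : Fin k, (Measure.pi fun _ : Fin n => D i) (B i) := by
          refine Finset.sum_congr rfl fun i _ => ?_
          rw [hμ]
          exact pi_eval_measure_aux (α := fun _ : Fin k => (Fin n → X × Y))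
            (fun i => Measure.pi fun _ : Fin n => D i) i (B i)
      _ ≤ ∑ _i : Fin k, ENNReal.ofReal (δ / (4 * k * ((t:ℝ) + 1) ^ 2)) :=
          Finset.sum_le_sum fun i _ => hkey i
      _ = (k : ℝ≥0∞) * ENNReal.ofReal (δ / (4 * k * ((t:ℝ) + 1) ^ 2)) := by
          rw [Finset.sum_const, Finset.card_univ, Fintype.card_fin, nsmul_eq_mul]
      _ = ENNReal.ofReal (δ / (4 * ((t:ℝ) + 1) ^ 2)) := by
          rw [show (k : ℝ≥0∞) = ENNReal.ofReal (k : ℝ) by simp,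
            ← ENNReal.ofReal_mul (by positivity)]
          congr 1
          have hkne : (k:ℝ) ≠ 0 := by linarith
          field_simp
  set s : ℝ := δ / (4 * ((t:ℝ) + 1) ^ 2) with hsdef
  have hs0 : 0 ≤ s := by positivity
  have hs1 : s ≤ 1 := by
    rw [hsdef, div_le_one (by positivity)]
    nlinarith
  have hadd : μ T + μ Tᶜ = 1 := by
    rw [measure_add_measure_compl hT]
    exact measure_univ
  have hfin : ENNReal.ofReal (1 - s) + ENNReal.ofReal s ≤ μ T + ENNReal.ofReal s := by
    rw [← ENNReal.ofReal_add (by linarith) hs0, show 1 - s + s = 1 by ring,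
      ENNReal.ofReal_one]
    calc (1:ℝ≥0∞) = μ T + μ Tᶜ := hadd.symm
      _ ≤ μ T + ENNReal.ofReal s := add_le_add_right hTcb _
  exact (ENNReal.add_le_add_iff_right ENNReal.ofReal_ne_top).mp hfin
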